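/- For every λ ∈ X⁺: E^∞_λ = ∑ (over all sequences (μ₀, μ₁, μ₂, …) in X⁺ with μ_h = 0 for all but finitely many h) of ( ∏_{h≥0} p_{μ_h, λ^h + p·μ_{h+1}} ) · E⁰_{μ₀}. Here in each term all but finitely many factors of the product equal 1 (namely p_{0,0} = 1), so the infinite product makes sense, and only finitely many sequences contribute a nonzero term, so the sum makes sense. -/

import Mathlib

set_option linter.unusedSectionVars false
set_option linter.unusedVariables false
set_option maxHeartbeats 1000000


/-!
Setting: `X⁺ = I → ℕ` (componentwise addition) for a finite index set `I`, `p ≥ 2`.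
`digit p lam k` is the `k`-th base-`p` digit `λ^k` of `lam` (so `λ^k ∈ X⁺_red` and
`lam = ∑_k p^k • λ^k`); `shift p k lam = ∑_{j≥k} p^{j-k} λ^j`;
`trunc p k lam = ∑_{0≤j≤k-1} p^j λ^j`.
-/

namespace LusztigChar

variable {I : Type*} [Fintype I] {R : Type*} [CommRing R]

/-- The `k`-th digit `λ^k` of `λ ∈ X⁺ = I → ℕ` in base `p`. -/
def digit (p : ℕ) (lam : I → ℕ) (k : ℕ) : I → ℕ := fun i => lam i / p ^ k % p

/-- `∑_{j≥k} p^{j-k} λ^j ∈ X⁺` (a sum with finitely many nonzero terms). -/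
noncomputable def shift (p k : ℕ) (lam : I → ℕ) : I → ℕ :=
  ∑ᶠ j : ℕ, p ^ j • digit p lam (k + j)

/-- `∑_{0≤j≤k-1} p^j λ^j ∈ X⁺`. -/
def trunc (p k : ℕ) (lam : I → ℕ) : I → ℕ :=
  ∑ j ∈ Finset.range k, p ^ j • digit p lam j

/-- The recursive family `E^k : X⁺ → R` built from `E⁰ = E0` and the integers
`p_{μ,λ} = P μ λ`:  `E^k_λ = ∑_μ p_{μ, ∑_{j≥k-1} p^{j-k+1} λ^j} · E^{k-1}_{∑_{0≤j≤k-2} p^j λ^j + p^{k-1} μ}`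
for `k ≥ 1`. -/
noncomputable def E (p : ℕ) (P : (I → ℕ) → (I → ℕ) → ℤ) (E0 : (I → ℕ) → R) :
    ℕ → (I → ℕ) → R
  | 0 => E0
  | k + 1 => fun lam =>
      ∑ᶠ mu : I → ℕ, P mu (shift p k lam) • E p P E0 k (trunc p k lam + p ^ k • mu)

lemma mod_mul' (n a b : ℕ) : n % (a * b) = a * (n / a % b) + n % a := by
  conv_lhs => rw [← Nat.div_add_mod (n % (a * b)) a]
  rw [Nat.mod_mul_right_div_self, Nat.mod_mod_of_dvd _ ⟨b, rfl⟩]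

lemma sum_range_digit (p n k : ℕ) :
    ∑ j ∈ Finset.range k, p ^ j * (n / p ^ j % p) = n % p ^ k := by
  induction k with
  | zero => simp [Nat.mod_one]
  | succ k ih =>
    rw [Finset.sum_range_succ, ih, pow_succ, mod_mul', add_comm]

lemma trunc_apply (p k : ℕ) (lam : I → ℕ) (i : I) : trunc p k lam i = lam i % p ^ k := by
  simp [trunc, digit, Finset.sum_apply, sum_range_digit]

lemma exists_lt_pow (hp : 2 ≤ p) (lam : I → ℕ) : ∃ L : ℕ, ∀ i, lam i < p ^ L := by
  refine ⟨Finset.univ.sup lam + 1, fun i => ?_⟩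
  calc lam i ≤ Finset.univ.sup lam := Finset.le_sup (Finset.mem_univ i)
    _ < Finset.univ.sup lam + 1 := Nat.lt_succ_self _
    _ ≤ 2 ^ (Finset.univ.sup lam + 1) := Nat.lt_two_pow_self.le
    _ ≤ p ^ (Finset.univ.sup lam + 1) := Nat.pow_le_pow_left hp _

lemma shift_apply (hp : 2 ≤ p) (k : ℕ) (lam : I → ℕ) (i : I) :
    shift p k lam i = lam i / p ^ k := by
  obtain ⟨L, hL⟩ := exists_lt_pow hp lam
  have hsupp : (Function.support fun j => p ^ j • digit p lam (k + j)) ⊆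
      ↑(Finset.range L) := by
    intro j hj
    simp only [Function.mem_support, ne_eq] at hj
    obtain ⟨i', hi'⟩ := Function.ne_iff.1 hj
    simp only [Pi.smul_apply, smul_eq_mul, Pi.zero_apply, digit] at hi'
    have h1 : lam i' / p ^ (k + j) ≠ 0 := by
      intro h0; rw [h0] at hi'; simp at hi'
    have h2 : p ^ (k + j) ≤ lam i' := by
      by_contra hlt
      exact h1 (Nat.div_eq_of_lt (lt_of_not_ge hlt))
    have h3 : p ^ (k + j) < p ^ L := lt_of_le_of_lt h2 (hL i')
    have h4 : k + j < L := by
      exact (Nat.pow_lt_pow_iff_right hp).1 h3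
    simp only [Finset.coe_range, Set.mem_Iio]
    omega
  rw [shift, finsum_eq_sum_of_support_subset _ hsupp, Finset.sum_apply]
  have : ∀ j, (p ^ j • digit p lam (k + j)) i = p ^ j * (lam i / p ^ k / p ^ j % p) := by
    intro j
    simp only [Pi.smul_apply, smul_eq_mul, digit, Nat.div_div_eq_div_mul, ← pow_add]
  simp only [this, sum_range_digit]
  exact Nat.mod_eq_of_lt (lt_of_le_of_lt (Nat.div_le_self _ _) (hL i))

lemma shift_zero' (hp : 2 ≤ p) (lam : I → ℕ) : shift p 0 lam = lam := by
  funext i; rw [shift_apply hp, pow_zero, Nat.div_one]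

lemma trunc_zero' (p : ℕ) (lam : I → ℕ) : trunc p 0 lam = 0 := by
  simp [trunc]

lemma trunc_add_shift (hp : 2 ≤ p) (k : ℕ) (lam : I → ℕ) :
    trunc p k lam + p ^ k • shift p k lam = lam := by
  funext i
  simp only [Pi.add_apply, Pi.smul_apply, smul_eq_mul, trunc_apply, shift_apply hp]
  exact Nat.mod_add_div _ _

lemma digit_combine (hp : 2 ≤ p) {j k : ℕ} (hjk : j < k) (lam ν : I → ℕ) :
    digit p (trunc p k lam + p ^ k • ν) j = digit p lam j := by
  funext i
  have hppos : 0 < p ^ j := Nat.pow_pos (by omega)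
  have hk : p ^ k = p ^ j * p ^ (k - j) := by rw [← pow_add]; congr 1; omega
  have hkj : p ^ (k - j) = p * p ^ (k - j - 1) := by rw [← pow_succ']; congr 1; omega
  simp only [digit, Pi.add_apply, Pi.smul_apply, smul_eq_mul, trunc_apply]
  rw [hk, mul_assoc, Nat.add_mul_div_left _ _ hppos, Nat.mod_mul_right_div_self]
  rw [hkj, mul_assoc, Nat.add_mul_mod_self_left, Nat.mod_mod_of_dvd _ ⟨p ^ (k - j - 1), rfl⟩]

lemma shift_combine (hp : 2 ≤ p) (k : ℕ) (lam ν : I → ℕ) :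
    shift p k (trunc p (k + 1) lam + p ^ (k + 1) • ν) = digit p lam k + p • ν := by
  funext i
  have hppos : 0 < p ^ k := Nat.pow_pos (by omega)
  simp only [shift_apply hp, Pi.add_apply, Pi.smul_apply, smul_eq_mul, trunc_apply, digit]
  rw [pow_succ, mul_assoc, Nat.add_mul_div_left _ _ hppos, Nat.mod_mul_right_div_self]


section NLemmas

lemma apply_le_N (N : (I → ℕ) →+ ℕ) (hN_zero : ∀ a : I → ℕ, N a = 0 → a = 0)
    (μ : I → ℕ) (i : I) : μ i ≤ N μ := by
  classical
  have h1 : 0 < N (Pi.single i 1) := by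
    rcases Nat.eq_zero_or_pos (N (Pi.single i 1)) with h | h
    · exact absurd (congrFun (hN_zero _ h) i) (by simp)
    · exact h
  have h2 : μ = ∑ j, Pi.single j (μ j) := (Finset.univ_sum_single μ).symm
  have h3 : N μ = ∑ j, N (Pi.single j (μ j)) := by
    conv_lhs => rw [h2]
    exact map_sum N _ _
  have h4 : N (Pi.single i (μ i)) ≤ N μ := by
    rw [h3]
    exact Finset.single_le_sum (f := fun j => N (Pi.single j (μ j)))
      (fun j _ => Nat.zero_le _) (Finset.mem_univ i)
  have h5 : Pi.single i (μ i) = μ i • (Pi.single i 1 : I → ℕ) := by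
    funext j
    by_cases h : j = i
    · subst h; simp
    · simp [Pi.single_eq_of_ne h]
  have h6 : N (Pi.single i (μ i)) = μ i * N (Pi.single i 1) := by
    rw [h5, map_nsmul]; simp
  calc μ i ≤ μ i * N (Pi.single i 1) := Nat.le_mul_of_pos_right _ h1
    _ ≤ N μ := h6 ▸ h4

lemma finite_N_le (N : (I → ℕ) →+ ℕ) (hN_zero : ∀ a : I → ℕ, N a = 0 → a = 0)
    (C : ℕ) : {μ : I → ℕ | N μ ≤ C}.Finite := by
  apply Set.Finite.subset (Set.Finite.pi (fun i : I => Set.finite_Iic C))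
  intro μ hμ
  simp only [Set.mem_pi, Set.mem_univ, Set.mem_Iic, forall_true_left]
  intro i
  exact le_trans (apply_le_N N hN_zero μ i) hμ

end NLemmas

noncomputable def coeff (p : ℕ) (P : (I → ℕ) → (I → ℕ) → ℤ) (lam : I → ℕ) (k : ℕ)
    (mu : Fin (k + 1) → I → ℕ) : ℤ :=
  (∏ h : Fin k, P (mu h.castSucc) (digit p lam h + p • mu h.succ)) *
    P (mu (Fin.last k)) (shift p k lam)

lemma coeff_snoc (p : ℕ) (P : (I → ℕ) → (I → ℕ) → ℤ) (lam : I → ℕ) (k : ℕ)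
    (mu : Fin (k + 1) → I → ℕ) (ν : I → ℕ) :
    coeff p P lam (k + 1) (Fin.snoc mu ν) =
      ((∏ h : Fin k, P (mu h.castSucc) (digit p lam h + p • mu h.succ)) *
        P (mu (Fin.last k)) (digit p lam k + p • ν)) * P ν (shift p (k + 1) lam) := by
  unfold coeff
  rw [Fin.snoc_last]
  congr 1
  rw [Fin.prod_univ_castSucc]
  congr 1
  · apply Finset.prod_congr rfl
    intro g _
    rw [Fin.succ_castSucc, Fin.snoc_castSucc, Fin.snoc_castSucc, Fin.coe_castSucc]
  · rw [Fin.succ_last, Fin.snoc_last, Fin.snoc_castSucc, Fin.val_last]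

lemma coeff_combine (hp : 2 ≤ p) (P : (I → ℕ) → (I → ℕ) → ℤ) (lam ν : I → ℕ) (k : ℕ)
    (mu : Fin (k + 1) → I → ℕ) :
    coeff p P (trunc p (k + 1) lam + p ^ (k + 1) • ν) k mu =
      (∏ h : Fin k, P (mu h.castSucc) (digit p lam h + p • mu h.succ)) *
        P (mu (Fin.last k)) (digit p lam k + p • ν) := by
  unfold coeff
  rw [shift_combine hp]
  congr 1
  apply Finset.prod_congr rfl
  intro g _
  rw [digit_combine hp (by omega : (g : ℕ) < k + 1)]

lemma N_mono_pointwise (N : (I → ℕ) →+ ℕ) (a b : I → ℕ) (h : ∀ i, a i ≤ b i) :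
    N a ≤ N b := by
  have hb : b = a + (b - a) := by
    funext i
    simp only [Pi.add_apply, Pi.sub_apply]
    have := h i
    omega
  rw [hb, map_add]
  exact Nat.le_add_right _ _

lemma N_digit_le (N : (I → ℕ) →+ ℕ) (p : ℕ) (lam : I → ℕ) (h : ℕ) :
    N (digit p lam h) ≤ N lam :=
  N_mono_pointwise N _ _ fun i =>
    le_trans (Nat.mod_le _ _) (Nat.div_le_self _ _)

lemma N_shift_le (hp : 2 ≤ p) (N : (I → ℕ) →+ ℕ) (k : ℕ) (lam : I → ℕ) :
    N (shift p k lam) ≤ N lam := by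
  conv_rhs => rw [← trunc_add_shift hp k lam]
  rw [map_add, map_nsmul, smul_eq_mul]
  calc N (shift p k lam) ≤ p ^ k * N (shift p k lam) :=
        Nat.le_mul_of_pos_left _ (Nat.pow_pos (by omega))
    _ ≤ _ := Nat.le_add_left _ _

lemma coeff_factors_ne_zero {p : ℕ} {P : (I → ℕ) → (I → ℕ) → ℤ} {lam : I → ℕ} {k : ℕ}
    {mu : Fin (k + 1) → I → ℕ} (hne : coeff p P lam k mu ≠ 0) :
    (∀ h : Fin k, P (mu h.castSucc) (digit p lam h + p • mu h.succ) ≠ 0) ∧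
      P (mu (Fin.last k)) (shift p k lam) ≠ 0 := by
  rw [coeff, mul_ne_zero_iff] at hne
  exact ⟨fun h => Finset.prod_ne_zero_iff.1 hne.1 h (Finset.mem_univ h), hne.2⟩

lemma coeff_bound (hp : 2 ≤ p)
    (le : (I → ℕ) → (I → ℕ) → Prop) (N : (I → ℕ) →+ ℕ)
    (hN_mono : ∀ a b, le a b → N a ≤ N b)
    (P : (I → ℕ) → (I → ℕ) → ℤ) (hP_le : ∀ mu lam, P mu lam ≠ 0 → le mu lam)
    (lam : I → ℕ) (k : ℕ) (mu : Fin (k + 1) → I → ℕ)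
    (hne : coeff p P lam k mu ≠ 0) (j : Fin (k + 1)) :
    N (mu j) ≤ N lam * (p + 1) ^ (k + 1) := by
  obtain ⟨hfac, hlast⟩ := coeff_factors_ne_zero hne
  have key : ∀ d : ℕ, ∀ hd : d ≤ k, N (mu ⟨k - d, by omega⟩) ≤ N lam * (p + 1) ^ (d + 1) := by
    intro d
    induction d with
    | zero =>
      intro _
      have h1 : (⟨k - 0, by omega⟩ : Fin (k + 1)) = Fin.last k := Fin.ext (by simp)
      rw [h1]
      calc N (mu (Fin.last k)) ≤ N (shift p k lam) := hN_mono _ _ (hP_le _ _ hlast)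
        _ ≤ N lam := N_shift_le hp N k lam
        _ ≤ N lam * (p + 1) ^ (0 + 1) := Nat.le_mul_of_pos_right _ (by positivity)
    | succ d ih =>
      intro hd
      have hdk : d ≤ k := by omega
      set h : Fin k := ⟨k - (d + 1), by omega⟩ with hh
      have hc : h.castSucc = (⟨k - (d + 1), by omega⟩ : Fin (k + 1)) := rfl
      have hs : h.succ = (⟨k - d, by omega⟩ : Fin (k + 1)) := Fin.ext (by simp [hh]; omega)
      have h1 : N (mu h.castSucc) ≤ N (digit p lam (h : ℕ) + p • mu h.succ) :=
        hN_mono _ _ (hP_le _ _ (hfac h))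
      rw [map_add, map_nsmul, smul_eq_mul] at h1
      have h2 : N (mu ⟨k - (d + 1), by omega⟩) ≤ N lam + p * (N lam * (p + 1) ^ (d + 1)) := by
        rw [← hc]
        refine le_trans h1 ?_
        have := ih hdk
        rw [← hs] at this
        exact Nat.add_le_add (N_digit_le N p lam _) (Nat.mul_le_mul_left p this)
      refine le_trans h2 ?_
      have e1 : 1 ≤ (p + 1) ^ (d + 1) := Nat.one_le_pow _ _ (by omega)
      calc N lam + p * (N lam * (p + 1) ^ (d + 1))
          ≤ N lam * (p + 1) ^ (d + 1) + p * (N lam * (p + 1) ^ (d + 1)) := by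
            exact Nat.add_le_add_right (Nat.le_mul_of_pos_right _ (by omega)) _
        _ = N lam * (p + 1) ^ (d + 1 + 1) := by ring
  have hj : (⟨k - (k - (j : ℕ)), by omega⟩ : Fin (k + 1)) = j := Fin.ext (by simp; omega)
  have := key (k - (j : ℕ)) (by omega)
  rw [hj] at this
  refine le_trans this ?_
  exact Nat.mul_le_mul_left _ (Nat.pow_le_pow_right (by omega) (by omega))

lemma coeff_support_finite (hp : 2 ≤ p)
    (le : (I → ℕ) → (I → ℕ) → Prop) (N : (I → ℕ) →+ ℕ)
    (hN_zero : ∀ a : I → ℕ, N a = 0 → a = 0)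
    (hN_mono : ∀ a b, le a b → N a ≤ N b)
    (P : (I → ℕ) → (I → ℕ) → ℤ) (hP_le : ∀ mu lam, P mu lam ≠ 0 → le mu lam)
    (lam : I → ℕ) (k : ℕ) (C : ℕ) (hC : N lam * (p + 1) ^ (k + 1) ≤ C) :
    {mu : Fin (k + 1) → I → ℕ | coeff p P lam k mu ≠ 0} ⊆
      Set.pi Set.univ (fun _ : Fin (k + 1) => {μ : I → ℕ | N μ ≤ C}) := by
  intro mu hmu j _
  exact le_trans (coeff_bound hp le N hN_mono P hP_le lam k mu hmu j) hC

lemma box_finite (N : (I → ℕ) →+ ℕ) (hN_zero : ∀ a : I → ℕ, N a = 0 → a = 0)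
    (k C : ℕ) :
    (Set.pi Set.univ (fun _ : Fin (k + 1) => {μ : I → ℕ | N μ ≤ C})).Finite :=
  Set.Finite.pi fun _ => finite_N_le N hN_zero C

lemma formula (p : ℕ) (hp : 2 ≤ p)
    (le : (I → ℕ) → (I → ℕ) → Prop) (N : (I → ℕ) →+ ℕ)
    (hN_zero : ∀ a : I → ℕ, N a = 0 → a = 0)
    (hN_mono : ∀ a b, le a b → N a ≤ N b)
    (P : (I → ℕ) → (I → ℕ) → ℤ) (hP_le : ∀ mu lam, P mu lam ≠ 0 → le mu lam)
    (E0 : (I → ℕ) → R) :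
    ∀ k lam, E p P E0 (k + 1) lam =
      ∑ᶠ mu : Fin (k + 1) → I → ℕ, coeff p P lam k mu • E0 (mu 0) := by
  intro k
  induction k with
  | zero =>
    intro lam
    rw [E]
    beta_reduce
    have h1 : (fun ν : I → ℕ =>
        P ν (shift p 0 lam) • E p P E0 0 (trunc p 0 lam + p ^ 0 • ν)) =
        fun ν => P ν (shift p 0 lam) • E0 ν := by
      funext ν
      rw [trunc_zero', pow_zero, one_smul, zero_add]
      rfl
    rw [h1, ← finsum_comp_equiv (Equiv.funUnique (Fin 1) (I → ℕ)).symm]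
    apply finsum_congr
    intro ν
    simp [coeff, Equiv.funUnique]
  | succ k ih =>
    intro lam
    classical
    rw [E]
    beta_reduce
    set s := shift p (k + 1) lam with hs
    have hNs : N s ≤ N lam := N_shift_le hp N (k + 1) lam
    set C := (N lam + p ^ (k + 1) * N lam) * (p + 1) ^ (k + 1) with hC
    have hA : {ν : I → ℕ | N ν ≤ N s}.Finite := finite_N_le N hN_zero _
    set A : Finset (I → ℕ) := hA.toFinset with hAdef
    have hBfin := box_finite N hN_zero k C
    set B : Finset (Fin (k + 1) → I → ℕ) := hBfin.toFinset with hBdef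
    -- bound on lam' ν
    have hlam' : ∀ ν : I → ℕ, N ν ≤ N s →
        N (trunc p (k + 1) lam + p ^ (k + 1) • ν) * (p + 1) ^ (k + 1) ≤ C := by
      intro ν hν
      rw [hC]
      apply Nat.mul_le_mul_right
      rw [map_add, map_nsmul, smul_eq_mul]
      have h2 : N (trunc p (k + 1) lam) ≤ N lam := by
        apply N_mono_pointwise
        intro i
        rw [trunc_apply]
        exact Nat.mod_le _ _
      exact Nat.add_le_add h2 (Nat.mul_le_mul_left _ (le_trans hν hNs))
    -- step 1 : outer finsum over A
    have hsupp1 : (Function.support fun ν : I → ℕ =>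
        P ν s • E p P E0 (k + 1) (trunc p (k + 1) lam + p ^ (k + 1) • ν)) ⊆ ↑A := by
      intro ν hν
      simp only [Function.mem_support, ne_eq] at hν
      have hP : P ν s ≠ 0 := by
        intro h0
        rw [h0, zero_smul] at hν
        exact hν rfl
      simp only [hAdef, Set.Finite.coe_toFinset, Set.mem_setOf_eq]
      exact hN_mono _ _ (hP_le _ _ hP)
    rw [finsum_eq_sum_of_support_subset _ hsupp1]
    -- step 2 : rewrite each summand
    have hstep2 : ∀ ν ∈ A,
        P ν s • E p P E0 (k + 1) (trunc p (k + 1) lam + p ^ (k + 1) • ν) =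
        ∑ mu ∈ B, coeff p P lam (k + 1) (Fin.snoc mu ν) • E0 ((Fin.snoc mu ν : Fin (k + 2) → I → ℕ) 0) := by
      intro ν hν
      have hνA : N ν ≤ N s := by
        simpa [hAdef] using hν
      rw [ih]
      have hsupp2 : (Function.support fun mu : Fin (k + 1) → I → ℕ =>
          coeff p P (trunc p (k + 1) lam + p ^ (k + 1) • ν) k mu • E0 (mu 0)) ⊆ ↑B := by
        intro mu hmu
        simp only [Function.mem_support, ne_eq] at hmu
        have hcne : coeff p P (trunc p (k + 1) lam + p ^ (k + 1) • ν) k mu ≠ 0 := by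
          intro h0
          rw [h0, zero_smul] at hmu
          exact hmu rfl
        simp only [hBdef, Set.Finite.coe_toFinset]
        intro j _
        exact le_trans (coeff_bound hp le N hN_mono P hP_le _ k mu hcne j)
          (le_trans (Nat.mul_le_mul_right _ le_rfl) (hlam' ν hνA))
      rw [finsum_eq_sum_of_support_subset _ hsupp2, Finset.smul_sum]
      apply Finset.sum_congr rfl
      intro mu _
      rw [smul_smul, coeff_combine hp, coeff_snoc]
      have h0 : (Fin.snoc mu ν : Fin (k + 2) → I → ℕ) 0 = mu 0 := by
        rw [show (0 : Fin (k + 2)) = Fin.castSucc 0 from rfl, Fin.snoc_castSucc]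
      rw [h0]
      congr 1
      ring
    rw [Finset.sum_congr rfl hstep2]
    -- step 3 : RHS as a double sum
    set D : Finset (Fin (k + 2) → I → ℕ) := (A ×ˢ B).image fun q => Fin.snoc q.2 q.1
      with hDdef
    have hsnoc_eq : ∀ mu' : Fin (k + 2) → I → ℕ,
        Fin.snoc (fun g : Fin (k + 1) => mu' g.castSucc) (mu' (Fin.last (k + 1))) = mu' := by
      intro mu'
      funext j
      induction j using Fin.lastCases with
      | last => rw [Fin.snoc_last]
      | cast g => rw [Fin.snoc_castSucc]
    have hsupp3 : (Function.support fun mu' : Fin (k + 2) → I → ℕ =>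
        coeff p P lam (k + 1) mu' • E0 (mu' 0)) ⊆ ↑D := by
      intro mu' hmu'
      simp only [Function.mem_support, ne_eq] at hmu'
      have hcne : coeff p P lam (k + 1) mu' ≠ 0 := by
        intro h0
        rw [h0, zero_smul] at hmu'
        exact hmu' rfl
      set ν := mu' (Fin.last (k + 1)) with hν
      set mu := fun g : Fin (k + 1) => mu' g.castSucc with hmu
      rw [← hsnoc_eq mu', coeff_snoc, mul_ne_zero_iff] at hcne
      have hνA : ν ∈ A := by
        simp only [hAdef, Set.Finite.mem_toFinset, Set.mem_setOf_eq]
        exact hN_mono _ _ (hP_le _ _ hcne.2)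
      have hmuB : mu ∈ B := by
        have hc2 : coeff p P (trunc p (k + 1) lam + p ^ (k + 1) • ν) k mu ≠ 0 := by
          rw [coeff_combine hp]
          exact hcne.1
        simp only [hBdef, Set.Finite.mem_toFinset]
        intro j _
        refine le_trans (coeff_bound hp le N hN_mono P hP_le _ k mu hc2 j)
          (hlam' ν ?_)
        simpa [hAdef] using hνA
      simp only [hDdef, Finset.coe_image, Set.mem_image, Finset.mem_coe,
        Finset.mem_product]
      exact ⟨(ν, mu), ⟨hνA, hmuB⟩, hsnoc_eq mu'⟩
    rw [finsum_eq_sum_of_support_subset _ hsupp3]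
    rw [Finset.sum_image ?hinj]
    case hinj =>
      intro q hq q' hq' heq
      have h1 : q.1 = q'.1 := by
        have := congrFun heq (Fin.last (k + 1))
        beta_reduce at this
        rwa [Fin.snoc_last, Fin.snoc_last] at this
      have h2 : q.2 = q'.2 := by
        funext g
        have := congrFun heq g.castSucc
        beta_reduce at this
        rwa [Fin.snoc_castSucc, Fin.snoc_castSucc] at this
      exact Prod.ext h1 h2
    rw [Finset.sum_product]
  

/-- `E^∞_λ` equals the sum, over all finitely supported sequences
`(μ₀, μ₁, …)` in `X⁺`, of `(∏_{h≥0} p_{μ_h, λ^h + p·μ_{h+1}}) · E⁰_{μ₀}`; in each term all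
but finitely many factors equal `1`, and only finitely many sequences contribute. -/
theorem Einf_eq_sum_infinite_prod {I : Type*} [Fintype I] {R : Type*} [CommRing R]
    (p : ℕ) (hp : 2 ≤ p)
    (le : (I → ℕ) → (I → ℕ) → Prop)
    (hle_refl : ∀ a, le a a)
    (hle_antisymm : ∀ a b, le a b → le b a → a = b)
    (hle_trans : ∀ a b c, le a b → le b c → le a c)
    (N : (I → ℕ) →+ ℕ)
    (hN_zero : ∀ a, N a = 0 → a = 0)
    (hN_mono : ∀ a b, le a b → N a ≤ N b)
    (P : (I → ℕ) → (I → ℕ) → ℤ)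
    (hP_le : ∀ mu lam, P mu lam ≠ 0 → le mu lam)
    (hP_diag : ∀ lam, P lam lam = 1)
    (E0 : (I → ℕ) → R)
    (Einf : (I → ℕ) → R)
    (hEinf : ∀ lam, ∃ n : ℕ, ∀ k, n ≤ k → E p P E0 k lam = Einf lam)
    (lam : I → ℕ) :
    (∀ mu : {f : ℕ → I → ℕ // ∃ n : ℕ, ∀ h, n ≤ h → f h = 0},
      ∃ n : ℕ, ∀ h, n ≤ h → P (mu.1 h) (digit p lam h + p • mu.1 (h + 1)) = 1) ∧
    (Function.support fun mu : {f : ℕ → I → ℕ // ∃ n : ℕ, ∀ h, n ≤ h → f h = 0} =>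
      (∏ᶠ h : ℕ, P (mu.1 h) (digit p lam h + p • mu.1 (h + 1))) • E0 (mu.1 0)).Finite ∧
    Einf lam =
      ∑ᶠ mu : {f : ℕ → I → ℕ // ∃ n : ℕ, ∀ h, n ≤ h → f h = 0},
        (∏ᶠ h : ℕ, P (mu.1 h) (digit p lam h + p • mu.1 (h + 1))) • E0 (mu.1 0) := by
  classical
  obtain ⟨K0, hK0⟩ := exists_lt_pow hp lam
  obtain ⟨n0, hn0⟩ := hEinf lam
  set m := max n0 K0 with hm
  have hKm : K0 ≤ m := le_max_right _ _
  have hlt : ∀ (i : I) (h : ℕ), K0 ≤ h → lam i < p ^ h := fun i h hh =>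
    lt_of_lt_of_le (hK0 i) (Nat.pow_le_pow_right (by omega) hh)
  have hdig : ∀ h, K0 ≤ h → digit p lam h = 0 := by
    intro h hh
    funext i
    simp [digit, Nat.div_eq_of_lt (hlt i h hh)]
  have hshift0 : ∀ h, K0 ≤ h → shift p h lam = 0 := by
    intro h hh
    funext i
    rw [shift_apply hp, Nat.div_eq_of_lt (hlt i h hh)]
    rfl
  -- Goal 1
  have goal1 : ∀ mu : {f : ℕ → I → ℕ // ∃ n : ℕ, ∀ h, n ≤ h → f h = 0},
      ∃ n : ℕ, ∀ h, n ≤ h → P (mu.1 h) (digit p lam h + p • mu.1 (h + 1)) = 1 := by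
    intro mu
    obtain ⟨n, hn⟩ := mu.2
    refine ⟨max n K0, fun h hh => ?_⟩
    rw [hn h (le_trans (le_max_left n K0) hh), hn (h + 1) (by omega),
      hdig h (le_trans (le_max_right n K0) hh)]
    simpa using hP_diag 0
  have hfacne : ∀ mu : {f : ℕ → I → ℕ // ∃ n : ℕ, ∀ h, n ≤ h → f h = 0},
      (∏ᶠ h : ℕ, P (mu.1 h) (digit p lam h + p • mu.1 (h + 1))) ≠ 0 →
      ∀ h, P (mu.1 h) (digit p lam h + p • mu.1 (h + 1)) ≠ 0 := by
    intro mu hprod h0 heq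
    obtain ⟨n, hn1⟩ := goal1 mu
    have hfin : (Function.mulSupport fun h =>
        P (mu.1 h) (digit p lam h + p • mu.1 (h + 1))).Finite := by
      apply Set.Finite.subset (Set.finite_Iio n)
      intro h hh
      simp only [Function.mem_mulSupport] at hh
      simp only [Set.mem_Iio]
      by_contra hc
      push_neg at hc
      exact hh (hn1 h hc)
    exact hprod (finprod_eq_zero _ h0 heq hfin)
  have htail : ∀ mu : {f : ℕ → I → ℕ // ∃ n : ℕ, ∀ h, n ≤ h → f h = 0},
      (∀ h, P (mu.1 h) (digit p lam h + p • mu.1 (h + 1)) ≠ 0) →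
      ∀ h, K0 ≤ h → mu.1 h = 0 := by
    intro mu hfac
    obtain ⟨n, hn1⟩ := mu.2
    have aux : ∀ d h, K0 ≤ h → n ≤ h + d → mu.1 h = 0 := by
      intro d
      induction d with
      | zero => intro h _ hnh; exact hn1 h (by omega)
      | succ d ih =>
        intro h hK hnd
        by_cases hcase : n ≤ h
        · exact hn1 h hcase
        · have hnext : mu.1 (h + 1) = 0 := ih (h + 1) (by omega) (by omega)
          have hfach := hfac h
          rw [hdig h hK, hnext, smul_zero, add_zero] at hfach
          have hNle := hN_mono _ _ (hP_le _ _ hfach)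
          rw [map_zero, Nat.le_zero] at hNle
          exact hN_zero _ hNle
    intro h hK
    exact aux n h hK (by omega)
  have hNbound : ∀ mu : {f : ℕ → I → ℕ // ∃ n : ℕ, ∀ h, n ≤ h → f h = 0},
      (∀ h, P (mu.1 h) (digit p lam h + p • mu.1 (h + 1)) ≠ 0) →
      (∀ h, K0 ≤ h → mu.1 h = 0) →
      ∀ h, N (mu.1 h) ≤ N lam * (p + 1) ^ (m + 1) := by
    intro mu hfac htl
    have aux : ∀ d, d ≤ m → N (mu.1 (m - d)) ≤ N lam * (p + 1) ^ (d + 1) := by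
      intro d
      induction d with
      | zero =>
        intro _
        rw [Nat.sub_zero, htl m hKm, map_zero]
        exact Nat.zero_le _
      | succ d ih =>
        intro hd
        have h1 := hN_mono _ _ (hP_le _ _ (hfac (m - (d + 1))))
        rw [map_add, map_nsmul, smul_eq_mul] at h1
        rw [show m - (d + 1) + 1 = m - d by omega] at h1
        calc N (mu.1 (m - (d + 1)))
            ≤ N (digit p lam (m - (d + 1))) + p * N (mu.1 (m - d)) := h1
          _ ≤ N lam * (p + 1) ^ (d + 1) + p * (N lam * (p + 1) ^ (d + 1)) := by
              refine Nat.add_le_add ?_ (Nat.mul_le_mul_left p (ih (by omega)))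
              exact le_trans (N_digit_le N p lam _)
                (Nat.le_mul_of_pos_right _ (by positivity))
          _ = N lam * (p + 1) ^ (d + 1 + 1) := by ring
    intro h
    by_cases hcase : m ≤ h
    · rw [htl h (by omega), map_zero]
      exact Nat.zero_le _
    · have haux := aux (m - h) (by omega)
      rw [show m - (m - h) = h by omega] at haux
      exact le_trans haux
        (Nat.mul_le_mul_left _ (Nat.pow_le_pow_right (by omega) (by omega)))
  set Cb := N lam * (p + 1) ^ (m + 1) with hCb
  set SS : Set {f : ℕ → I → ℕ // ∃ n : ℕ, ∀ h, n ≤ h → f h = 0} :=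
    {mu | (∀ h, N (mu.1 h) ≤ Cb) ∧ ∀ h, m + 1 ≤ h → mu.1 h = 0} with hSS
  have hSSfin : SS.Finite := by
    have himg : (fun mu : {f : ℕ → I → ℕ // ∃ n : ℕ, ∀ h, n ≤ h → f h = 0} =>
        fun j : Fin (m + 1) => mu.1 j) '' SS ⊆
        Set.pi Set.univ (fun _ : Fin (m + 1) => {μ : I → ℕ | N μ ≤ Cb}) := by
      rintro _ ⟨mu, hmu, rfl⟩ j _
      exact hmu.1 j
    have hfin2 := (box_finite N hN_zero m Cb).subset himg
    apply Set.Finite.of_finite_image hfin2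
    intro mu hmu mu' hmu' heq
    apply Subtype.ext
    funext h
    by_cases hh : h < m + 1
    · exact congrFun heq ⟨h, hh⟩
    · rw [hmu.2 h (by omega), hmu'.2 h (by omega)]
  have hsuppSS : (Function.support fun mu :
      {f : ℕ → I → ℕ // ∃ n : ℕ, ∀ h, n ≤ h → f h = 0} =>
      (∏ᶠ h : ℕ, P (mu.1 h) (digit p lam h + p • mu.1 (h + 1))) • E0 (mu.1 0)) ⊆ SS := by
    intro mu hmu
    simp only [Function.mem_support, ne_eq] at hmu
    have hprod : (∏ᶠ h : ℕ, P (mu.1 h) (digit p lam h + p • mu.1 (h + 1))) ≠ 0 := by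
      intro h0
      rw [h0, zero_smul] at hmu
      exact hmu rfl
    have hfac := hfacne mu hprod
    have htl := htail mu hfac
    exact ⟨hNbound mu hfac htl, fun h hh => htl h (by omega)⟩
  refine ⟨goal1, hSSfin.subset hsuppSS, ?_⟩
  -- Goal 3
  have hEm : Einf lam = ∑ᶠ mu : Fin (m + 1) → I → ℕ, coeff p P lam m mu • E0 (mu 0) := by
    rw [← hn0 (m + 1) (by omega)]
    exact formula p hp le N hN_zero hN_mono P hP_le E0 m lam
  rw [hEm]
  set φ : (Fin (m + 1) → I → ℕ) → {f : ℕ → I → ℕ // ∃ n : ℕ, ∀ h, n ≤ h → f h = 0} :=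
    fun t => ⟨fun h => if hh : h < m + 1 then t ⟨h, hh⟩ else 0,
      ⟨m + 1, fun h hh => dif_neg (by omega)⟩⟩ with hφ
  have hφval : ∀ (t : Fin (m + 1) → I → ℕ) (h : ℕ) (hh : h < m + 1),
      (φ t).1 h = t ⟨h, hh⟩ := by
    intro t h hh
    simp only [hφ]
    rw [dif_pos hh]
  have hφ0 : ∀ (t : Fin (m + 1) → I → ℕ) (h : ℕ), m + 1 ≤ h → (φ t).1 h = 0 := by
    intro t h hh
    simp only [hφ]
    rw [dif_neg (by omega)]
  have hmatch : ∀ t : Fin (m + 1) → I → ℕ,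
      coeff p P lam m t • E0 (t 0) =
      (∏ᶠ h : ℕ, P ((φ t).1 h) (digit p lam h + p • (φ t).1 (h + 1))) • E0 ((φ t).1 0) := by
    intro t
    have hsup : (Function.mulSupport fun h : ℕ =>
        P ((φ t).1 h) (digit p lam h + p • (φ t).1 (h + 1))) ⊆ ↑(Finset.range (m + 1)) := by
      intro h hh
      simp only [Function.mem_mulSupport] at hh
      simp only [Finset.coe_range, Set.mem_Iio]
      by_contra hc
      push_neg at hc
      apply hh
      rw [hφ0 t h (by omega), hφ0 t (h + 1) (by omega),
        hdig h (by omega)]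
      simpa using hP_diag 0
    rw [finprod_eq_prod_of_mulSupport_subset _ hsup]
    have hφ00 : (φ t).1 0 = t 0 :=
      (hφval t 0 (by omega)).trans (congrArg t (by ext; simp))
    rw [hφ00]
    congr 1
    rw [← Fin.prod_univ_eq_prod_range, Fin.prod_univ_castSucc]
    unfold coeff
    congr 1
    · apply Finset.prod_congr rfl
      intro g _
      have hg := g.isLt
      have e1 : (φ t).1 ↑g.castSucc = t g.castSucc :=
        (hφval t ↑g.castSucc (by simp only [Fin.coe_castSucc]; omega)).trans
          (congrArg t (by ext; simp))
      have e2 : (φ t).1 (↑g.castSucc + 1) = t g.succ :=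
        (hφval t (↑g.castSucc + 1) (by simp only [Fin.coe_castSucc]; omega)).trans
          (congrArg t (by ext; simp))
      rw [e1, e2, Fin.coe_castSucc]
    · have e1 : (φ t).1 ↑(Fin.last m) = t (Fin.last m) :=
        (hφval t ↑(Fin.last m) (by rw [Fin.val_last]; omega)).trans
          (congrArg t (by ext; simp))
      have e2 : (φ t).1 (↑(Fin.last m) + 1) = 0 := hφ0 t _ (by rw [Fin.val_last])
      rw [e1, e2, Fin.val_last, hdig m hKm, hshift0 m hKm]
      simp
  set ψ : {f : ℕ → I → ℕ // ∃ n : ℕ, ∀ h, n ≤ h → f h = 0} → (Fin (m + 1) → I → ℕ) :=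
    fun mu => fun j => mu.1 j with hψ
  have hboxfin := box_finite N hN_zero m Cb
  have hsuppT : (Function.support fun t : Fin (m + 1) → I → ℕ =>
      coeff p P lam m t • E0 (t 0)) ⊆ ↑hboxfin.toFinset := by
    intro t ht
    simp only [Function.mem_support, ne_eq] at ht
    have hcne : coeff p P lam m t ≠ 0 := by
      intro h0
      rw [h0, zero_smul] at ht
      exact ht rfl
    simp only [Set.Finite.coe_toFinset]
    intro j _
    exact le_trans (coeff_bound hp le N hN_mono P hP_le lam m t hcne j) le_rfl
  rw [finsum_eq_sum_of_support_subset _ hsuppT,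
    finsum_eq_sum_of_support_subset (s := hSSfin.toFinset) _ (by
      exact fun x hx => (Set.Finite.mem_toFinset hSSfin).2 (hsuppSS hx))]
  apply Finset.sum_nbij' φ ψ
  · intro t ht
    simp only [Set.Finite.mem_toFinset] at ht ⊢
    constructor
    · intro h
      by_cases hh : h < m + 1
      · rw [hφval t h hh]
        exact ht ⟨h, hh⟩ (Set.mem_univ _)
      · rw [hφ0 t h (by omega), map_zero]
        exact Nat.zero_le _
    · intro h hh
      exact hφ0 t h hh
  · intro mu hmu
    simp only [Set.Finite.mem_toFinset] at hmu ⊢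
    intro j _
    exact hmu.1 j
  · intro t _
    funext j
    show (φ t).1 ↑j = t j
    exact (hφval t ↑j j.isLt).trans (congrArg t (by ext; simp))
  · intro mu hmu
    simp only [Set.Finite.mem_toFinset] at hmu
    apply Subtype.ext
    funext h
    by_cases hh : h < m + 1
    · rw [hφval _ h hh]
    · rw [hφ0 _ h (by omega), hmu.2 h (by omega)]
  · intro t _
    exact hmatch t


end LusztigChar
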